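/- Let α = √(3 + 2√2) and let F = x₀⁴ + x₀x₄³ + x₁⁴ − 6x₁²x₂² + x₂⁴ + x₃⁴ + x₃³x₄, regarded as a polynomial function on ℂ⁵. Set v = (0, α, 1, 0, 0) ∈ ℂ⁵. Then: (i) F(v) = 0 and v₁ = α·v₂, i.e. the point o = [0 : α : 1 : 0 : 0] lies on the Segre quartic X = {F = 0} and on the hyperplane Π = {x₁ = αx₂}; and (ii) for every p ∈ ℂ⁵ with F(p) = 0 and p₁ = α·p₂, and for all scalars s, t ∈ ℂ, the point s·p + t·v satisfies F(s·p + t·v) = 0 and (s·p + t·v)₁ = α·(s·p + t·v)₂. In particular, the hyperplane section X ∩ Π is a cone in Π ≅ ℙ³ with vertex o: every point of X ∩ Π lies on a projective line through o that is entirely contained in X ∩ Π. -/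

import Mathlib

/-- α = √(3 + 2√2). -/
noncomputable def segreAlpha : ℝ := Real.sqrt (3 + 2 * Real.sqrt 2)

/-- The Segre quartic polynomial, regarded as a function on ℂ⁵. -/
noncomputable def segreQuarticFun (x : Fin 5 → ℂ) : ℂ :=
  x 0 ^ 4 + x 0 * x 4 ^ 3 + x 1 ^ 4 - 6 * x 1 ^ 2 * x 2 ^ 2 + x 2 ^ 4 +
    x 3 ^ 4 + x 3 ^ 3 * x 4

/-- The vector v = (0, α, 1, 0, 0) ∈ ℂ⁵, representing the point o = [0 : α : 1 : 0 : 0]. -/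
noncomputable def segreVertex : Fin 5 → ℂ := ![0, (segreAlpha : ℂ), 1, 0, 0]

lemma segreAlpha_sq : ((segreAlpha : ℂ))^2 = 3 + 2 * (Real.sqrt 2 : ℝ) := by
  have h2 : (0:ℝ) ≤ Real.sqrt 2 := Real.sqrt_nonneg 2
  have h : (segreAlpha)^2 = 3 + 2 * Real.sqrt 2 := by
    unfold segreAlpha
    rw [Real.sq_sqrt]; nlinarith
  exact_mod_cast congrArg (Complex.ofReal) h

lemma segre_key : ((segreAlpha : ℂ))^4 - 6 * ((segreAlpha : ℂ))^2 + 1 = 0 := by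
  have hb : ((Real.sqrt 2 : ℝ) : ℂ)^2 = 2 := by
    have : (Real.sqrt 2)^2 = 2 := Real.sq_sqrt (by norm_num)
    exact_mod_cast congrArg (Complex.ofReal) this
  have ha := segreAlpha_sq
  linear_combination (((segreAlpha : ℂ))^2 - 3 + 2 * ((Real.sqrt 2 : ℝ) : ℂ)) * ha + 4 * hb

/-- (i) `F(v) = 0` and `v₁ = α·v₂`, so `o = [0 : α : 1 : 0 : 0]` lies on the Segre quartic
`X = {F = 0}` and on the hyperplane `Π = {x₁ = αx₂}`; and (ii) for every `p ∈ ℂ⁵` with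
`F(p) = 0` and `p₁ = α·p₂` and all `s t : ℂ`, the point `s·p + t·v` again satisfies
`F = 0` and `x₁ = α·x₂`.  Hence `X ∩ Π` is a cone with vertex `o`. -/
theorem segre_section_is_cone :
    segreQuarticFun segreVertex = 0 ∧
    segreVertex 1 = (segreAlpha : ℂ) * segreVertex 2 ∧
    ∀ p : Fin 5 → ℂ, segreQuarticFun p = 0 → p 1 = (segreAlpha : ℂ) * p 2 →
      ∀ s t : ℂ,
        segreQuarticFun (s • p + t • segreVertex) = 0 ∧
        (s • p + t • segreVertex) 1 = (segreAlpha : ℂ) * (s • p + t • segreVertex) 2 := by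
  have hkey := segre_key
  refine ⟨?_, ?_, ?_⟩
  · simp only [segreQuarticFun, segreVertex, Matrix.cons_val_zero, Matrix.cons_val_one,
      Matrix.head_cons, Matrix.cons_val_two, Matrix.tail_cons, Matrix.cons_val_three,
      Matrix.cons_val_four]
    linear_combination hkey
  · simp [segreVertex]
  · intro p hF hp s t
    constructor
    · simp only [segreQuarticFun, segreVertex, Pi.add_apply, Pi.smul_apply, smul_eq_mul,
        Matrix.cons_val_zero, Matrix.cons_val_one, Matrix.head_cons, Matrix.cons_val_two,
        Matrix.tail_cons, Matrix.cons_val_three, Matrix.cons_val_four] at hF ⊢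
      rw [hp] at hF ⊢
      linear_combination s^4 * hF + ((s * p 2 + t * 1)^4 - s^4 * (p 2)^4) * hkey
    · simp only [segreVertex, Pi.add_apply, Pi.smul_apply, smul_eq_mul,
        Matrix.cons_val_one, Matrix.head_cons, Matrix.cons_val_two, Matrix.tail_cons,
        Matrix.cons_val_zero]
      rw [hp]; ring
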